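/- Suppose (T, V) is a tree-decomposition of a graph G and k an integer such that for every node t of T there is a connected vertex set of size at most k + 1 containing V_t. Then every bramble of G can be covered by a connected vertex set of size at most k + 1; i.e., G has no bramble of connected order greater than k + 1. -/

import Mathlib

open SimpleGraph

universe u

/-- `x` and `y` are joined by a walk in `G` all of whose vertices lie in `S`. -/
def ConnIn {V : Type u} (G : SimpleGraph V) (S : Set V) (x y : V) : Prop :=
  ∃ p : G.Walk x y, ∀ v ∈ p.support, v ∈ S

/-- `S` is a (nonempty) connected vertex set of `G`, i.e. `G[S]` is connected. -/
def IsConnSet {V : Type u} (G : SimpleGraph V) (S : Set V) : Prop :=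
  S.Nonempty ∧ ∀ x ∈ S, ∀ y ∈ S, ConnIn G S x y

/-- A tree-decomposition of `G` over the tree `T`. -/
structure TreeDecomp {V ι : Type u} (G : SimpleGraph V) (T : SimpleGraph ι) where
  isTree : T.IsTree
  bag : ι → Set V
  exists_bag : ∀ v : V, ∃ t, v ∈ bag t
  exists_bag_adj : ∀ ⦃u v : V⦄, G.Adj u v → ∃ t, u ∈ bag t ∧ v ∈ bag t
  bag_sep : ∀ ⦃t₁ t₃ : ι⦄ (p : T.Walk t₁ t₃), p.IsPath → ∀ t₂ ∈ p.support,
      bag t₁ ∩ bag t₃ ⊆ bag t₂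

/-- The union of the bags `B u` over `u ∈ A`. -/
def unionBags {V ι : Type u} (B : ι → Set V) (A : Set ι) : Set V := ⋃ u ∈ A, B u

/-- `s` is a descendant of `t` in the tree `T` rooted at `r`:
`t` lies on the (unique) `r`–`s` path. -/
def Desc {ι : Type u} (T : SimpleGraph ι) (r t s : ι) : Prop :=
  ∃ p : T.Walk r s, p.IsPath ∧ t ∈ p.support

/-- The set of descendants of `t` (the subtree `T_t`). -/
def descSet {ι : Type u} (T : SimpleGraph ι) (r t : ι) : Set ι := {s | Desc T r t s}

/-- `s` is a child of `t` in the tree `T` rooted at `r`. -/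
def IsChild {ι : Type u} (T : SimpleGraph ι) (r t s : ι) : Prop :=
  T.Adj t s ∧ Desc T r t s

/-- The vertex set of the component of `t₁` in `T` minus the edge `t₁t₂`. -/
def Side {ι : Type u} (T : SimpleGraph ι) (t₁ t₂ : ι) : Set ι :=
  {u | ∃ p : T.Walk u t₁, p.IsPath ∧ t₂ ∉ p.support}

/-- The family of bags `B` is stable: for every tree edge `t₁t₂`, both sides
induce connected subgraphs of `G`. -/
def StableBags {V ι : Type u} (G : SimpleGraph V) (T : SimpleGraph ι) (B : ι → Set V) : Prop :=
  ∀ ⦃t₁ t₂ : ι⦄, T.Adj t₁ t₂ → IsConnSet G (unionBags B (Side T t₁ t₂))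

def TreeDecomp.Stable {V ι : Type u} {G : SimpleGraph V} {T : SimpleGraph ι}
    (td : TreeDecomp G T) : Prop :=
  StableBags G T td.bag

/-- `P` is a `t`-admissible path (w.r.t. the root `r` and bags `B`): a shortest
path lying in `V_{T_t}` joining two distinct components of `G[B t]`. -/
structure IsAdmissible {V ι : Type u} (G : SimpleGraph V) (T : SimpleGraph ι)
    (B : ι → Set V) (r t : ι) {x y : V} (P : G.Walk x y) : Prop where
  isPath : P.IsPath
  support_sub : ∀ v ∈ P.support, v ∈ unionBags B (descSet T r t)
  fst_mem : x ∈ B t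
  snd_mem : y ∈ B t
  not_conn : ¬ ConnIn G (B t) x y
  minimal : ∀ ⦃x' y' : V⦄ (Q : G.Walk x' y'), Q.IsPath →
      (∀ v ∈ Q.support, v ∈ unionBags B (descSet T r t)) →
      x' ∈ B t → y' ∈ B t → ¬ ConnIn G (B t) x' y' → P.length ≤ Q.length

/-- The updated bags obtained by adding the path `P` as in `(*)`:
`W_u = V_u ∪ (V(P) ∩ V_{T_u})` for descendants `u` of `t`, and `W_u = V_u` otherwise. -/
def updatedBag {V ι : Type u} (T : SimpleGraph ι) (B : ι → Set V) (r t : ι)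
    {G : SimpleGraph V} {x y : V} (P : G.Walk x y) (u : ι) : Set V :=
  B u ∪ {v | Desc T r t u ∧ v ∈ P.support ∧ v ∈ unionBags B (descSet T r u)}

/-- The tree-width of `G`: the least `k` such that `G` has a tree-decomposition
all of whose bags have at most `k + 1` vertices. -/
noncomputable def treewidth {V : Type u} (G : SimpleGraph V) : ℕ :=
  sInf {k | ∃ (ι : Type u) (T : SimpleGraph ι) (td : TreeDecomp G T),
    ∀ t, (td.bag t).ncard ≤ k + 1}

/-- A tree-decomposition is connected if every bag is a connected vertex set. -/
def TreeDecomp.IsConn {V ι : Type u} {G : SimpleGraph V} {T : SimpleGraph ι}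
    (td : TreeDecomp G T) : Prop :=
  ∀ t, IsConnSet G (td.bag t)

/-- The connected tree-width of `G`. -/
noncomputable def ctw {V : Type u} (G : SimpleGraph V) : ℕ :=
  sInf {k | ∃ (ι : Type u) (T : SimpleGraph ι) (td : TreeDecomp G T),
    td.IsConn ∧ ∀ t, (td.bag t).ncard ≤ k + 1}

/-- The weak connected tree-width of `G`: the least `k` such that `G` has a
tree-decomposition each of whose bags is contained in a connected set of at
most `k + 1` vertices. -/
noncomputable def wctw {V : Type u} (G : SimpleGraph V) : ℕ :=
  sInf {k | ∃ (ι : Type u) (T : SimpleGraph ι) (td : TreeDecomp G T),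
    ∀ t, ∃ X, td.bag t ⊆ X ∧ IsConnSet G X ∧ X.ncard ≤ k + 1}

/-- The characteristic vector over GF(2) of the edge set of a walk. -/
noncomputable def walkChar {V : Type u} {G : SimpleGraph V} {x y : V}
    (p : G.Walk x y) : Sym2 V → ZMod 2 :=
  fun e => by classical exact if e ∈ p.edges then 1 else 0

/-- The characteristic vectors of the cycles of `G` of length at most `ℓ`. -/
def cycleChars {V : Type u} (G : SimpleGraph V) (ℓ : ℕ) : Set (Sym2 V → ZMod 2) :=
  {f | ∃ (v : V) (p : G.Walk v v), p.IsCycle ∧ p.length ≤ ℓ ∧ f = walkChar p}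

/-- The cycles of length at most `ℓ` generate the cycle space of `G` over GF(2). -/
def GeneratesLE {V : Type u} (G : SimpleGraph V) (ℓ : ℕ) : Prop :=
  ∀ ⦃v : V⦄ (p : G.Walk v v), p.IsCycle →
    walkChar p ∈ Submodule.span (ZMod 2) (cycleChars G ℓ)

/-- `ℓ(G)`: the least `ℓ` such that the cycles of length at most `ℓ`
generate the cycle space of `G`. -/
noncomputable def ellGraph {V : Type u} (G : SimpleGraph V) : ℕ :=
  sInf {ℓ | GeneratesLE G ℓ}

/-- `Γ` is a set of cycles of `G` generating its cycle space over GF(2). -/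
def GeneratesSet {V : Type u} (G : SimpleGraph V) (Γ : Set (Σ v : V, G.Walk v v)) : Prop :=
  (∀ c ∈ Γ, c.2.IsCycle) ∧
  ∀ ⦃v : V⦄ (p : G.Walk v v), p.IsCycle →
    walkChar p ∈ Submodule.span (ZMod 2) {f | ∃ c ∈ Γ, f = walkChar c.2}

/-- A bramble: a collection of connected vertex sets, any two of which have
connected union. -/
def IsBramble {V : Type u} (G : SimpleGraph V) (B : Set (Set V)) : Prop :=
  (∀ S ∈ B, IsConnSet G S) ∧ ∀ S ∈ B, ∀ S' ∈ B, IsConnSet G (S ∪ S')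

/-- `X` is a connected cover of the bramble `B`. -/
def IsConnCover {V : Type u} (G : SimpleGraph V) (B : Set (Set V)) (X : Set V) : Prop :=
  IsConnSet G X ∧ ∀ S ∈ B, (X ∩ S).Nonempty

/-- The connected order of a bramble: the least size of a connected cover. -/
noncomputable def connOrder {V : Type u} (G : SimpleGraph V) (B : Set (Set V)) : ℕ :=
  sInf {n | ∃ X, IsConnCover G B X ∧ X.ncard = n}

/-- The maximum connected order of a bramble of `G`. -/
noncomputable def cbn {V : Type u} (G : SimpleGraph V) : ℕ :=
  sSup {n | ∃ B, IsBramble G B ∧ connOrder G B = n}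

/-- A geodesic cycle: a cycle containing a shortest `G`-path between any two
of its vertices. -/
def IsGeodesicCycle {V : Type u} (G : SimpleGraph V) {v : V} (p : G.Walk v v) : Prop :=
  p.IsCycle ∧ ∀ x ∈ p.support, ∀ y ∈ p.support,
    ∃ q : G.Walk x y, q.length = G.dist x y ∧ ∀ e ∈ q.edges, e ∈ p.edges

/-- The graph obtained from `K_n` by subdividing every edge exactly `k` times:
the edge between `i < j` is replaced by the path
`i, ((i,j),0), ((i,j),1), …, ((i,j),k-1), j`. -/
def subK (n k : ℕ) : SimpleGraph (Fin n ⊕ ({p : Fin n × Fin n // p.1 < p.2} × Fin k)) :=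
  SimpleGraph.fromRel fun u v =>
    match u, v with
    | Sum.inl i, Sum.inl j => i < j ∧ k = 0
    | Sum.inl i, Sum.inr (e, c) =>
        (e.val.1 = i ∧ (c : ℕ) = 0) ∨ (e.val.2 = i ∧ (c : ℕ) = k - 1)
    | Sum.inr (e, c), Sum.inr (e', c') => e = e' ∧ (c' : ℕ) = (c : ℕ) + 1
    | _, _ => False

section Helpers

variable {V ι : Type u} {G : SimpleGraph V} {T : SimpleGraph ι}

lemma side_closure {t₁ t₂ u u' : ι} (hu : u ∈ Side T t₁ t₂)
    (w : T.Walk u' u) (hw : t₂ ∉ w.support) : u' ∈ Side T t₁ t₂ := by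
  classical
  obtain ⟨p, hp, hp2⟩ := hu
  refine ⟨(w.append p).bypass, Walk.bypass_isPath _, fun hmem => ?_⟩
  have h2 := Walk.support_bypass_subset _ hmem
  rw [Walk.support_append] at h2
  rcases List.mem_append.mp h2 with h | h
  · exact hw h
  · exact hp2 (List.mem_of_mem_tail h)

lemma side_cover (htree : T.IsTree) {t₁ t₂ : ι} (hadj : T.Adj t₁ t₂) (u : ι) :
    u ∈ Side T t₁ t₂ ∨ u ∈ Side T t₂ t₁ := by
  classical
  obtain ⟨p, hp⟩ := (htree.existsUnique_path u t₁).exists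
  by_cases h2 : t₂ ∈ p.support
  · right
    refine ⟨p.takeUntil t₂ h2, hp.takeUntil h2, fun h1 => ?_⟩
    have hspec := p.take_spec h2
    have hnodup : p.support.Nodup := (Walk.isPath_def p).mp hp
    rw [← hspec, Walk.support_append] at hnodup
    have hdisj := List.disjoint_of_nodup_append hnodup
    have hne : t₂ ≠ t₁ := hadj.symm.ne
    have hlast : t₁ ∈ ((p.dropUntil t₂ h2).support).tail := by
      have hmem := (p.dropUntil t₂ h2).end_mem_support
      rw [(p.dropUntil t₂ h2).support_eq_cons] at hmem
      rcases List.mem_cons.mp hmem with hmem | hmem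
      · exact absurd hmem.symm hne
      · exact hmem
    exact hdisj h1 hlast
  · exact Or.inl ⟨p, hp, h2⟩

lemma side_disjoint (htree : T.IsTree) {t₁ t₂ u : ι} (hadj : T.Adj t₁ t₂)
    (h1 : u ∈ Side T t₁ t₂) (h2 : u ∈ Side T t₂ t₁) : False := by
  classical
  obtain ⟨p, hp, hp2⟩ := h1
  obtain ⟨q, hq, hq1⟩ := h2
  have hcpath : (q.concat hadj.symm).IsPath := by
    rw [Walk.isPath_def, Walk.support_concat]
    exact List.Nodup.append ((Walk.isPath_def q).mp hq) (List.nodup_singleton _)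
      (fun a ha hb => hq1 (by rwa [List.mem_singleton.mp hb] at ha))
  obtain ⟨r, _, hr⟩ := htree.existsUnique_path u t₁
  have heq : p = q.concat hadj.symm := (hr p hp).trans (hr _ hcpath).symm
  apply hp2
  rw [heq, Walk.support_concat]
  exact List.mem_append.mpr (Or.inl q.end_mem_support)


lemma mem_bag_of_cross (td : TreeDecomp G T) {t₁ t₂ : ι} (hadj : T.Adj t₁ t₂) {v : V}
    (h1 : v ∈ unionBags td.bag (Side T t₁ t₂)) (h2 : v ∈ unionBags td.bag (Side T t₂ t₁)) :
    v ∈ td.bag t₁ ∩ td.bag t₂ := by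
  classical
  simp only [unionBags, Set.mem_iUnion] at h1 h2
  obtain ⟨u₁, hu₁, hv₁⟩ := h1
  obtain ⟨u₂, hu₂, hv₂⟩ := h2
  obtain ⟨p, hp⟩ := (td.isTree.existsUnique_path u₁ u₂).exists
  have ht₁ : t₁ ∈ p.support := by
    by_contra hmem
    exact side_disjoint td.isTree hadj hu₁ (side_closure hu₂ p hmem)
  have ht₂ : t₂ ∈ p.support := by
    by_contra hmem
    refine side_disjoint td.isTree hadj (side_closure hu₁ p.reverse ?_) hu₂
    rwa [Walk.support_reverse, List.mem_reverse]
  exact ⟨td.bag_sep p hp t₁ ht₁ ⟨hv₁, hv₂⟩, td.bag_sep p hp t₂ ht₂ ⟨hv₁, hv₂⟩⟩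

lemma walk_confine (td : TreeDecomp G T) {t₁ t₂ : ι} (hadj : T.Adj t₁ t₂) {x y : V}
    (w : G.Walk x y) (hsep : ∀ v ∈ w.support, v ∉ td.bag t₁ ∩ td.bag t₂)
    (hx : x ∈ unionBags td.bag (Side T t₁ t₂)) :
    y ∈ unionBags td.bag (Side T t₁ t₂) := by
  induction w with
  | nil => exact hx
  | @cons a b c h p ih =>
      obtain ⟨u, hua, hub⟩ := td.exists_bag_adj h
      rcases side_cover td.isTree hadj u with hu | hu
      · refine ih (fun v hv => hsep v ?_) ?_
        · rw [Walk.support_cons]; exact List.mem_cons_of_mem _ hv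
        · exact Set.mem_iUnion₂.mpr ⟨u, hu, hub⟩
      · exfalso
        have haA : a ∈ unionBags td.bag (Side T t₂ t₁) := Set.mem_iUnion₂.mpr ⟨u, hu, hua⟩
        exact hsep a (Walk.start_mem_support _) (mem_bag_of_cross td hadj hx haA)

lemma conn_subset_side (td : TreeDecomp G T) {t t₂ : ι} (hadj : T.Adj t₂ t) {S : Set V}
    (hS : IsConnSet G S) (hdisj : ∀ v ∈ S, v ∉ td.bag t) {v : V} (hv : v ∈ S)
    (hvA : v ∈ unionBags td.bag (Side T t₂ t)) :
    ∀ w ∈ S, w ∈ unionBags td.bag (Side T t₂ t) := by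
  intro w hw
  obtain ⟨p, hp⟩ := hS.2 v hv w hw
  exact walk_confine td hadj p (fun z hz hz2 => hdisj z (hp z hz) hz2.2) hvA

lemma walk_decomp {u v : ι} (p : T.Walk u v) (hne : u ≠ v) :
    ∃ (w : ι) (h : T.Adj u w) (q : T.Walk w v), p = Walk.cons h q := by
  cases p with
  | nil => exact absurd rfl hne
  | cons h q => exact ⟨_, h, q, rfl⟩

end Helpers

/-- if every bag of a tree-decomposition is contained in a
connected set of at most `k + 1` vertices, then every bramble has a connected
cover of at most `k + 1` vertices. -/
theorem bramble_cover_of_td {V ι : Type u} [Finite V] (G : SimpleGraph V)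
    (T : SimpleGraph ι) (td : TreeDecomp G T) (k : ℕ)
    (h : ∀ t, ∃ X, td.bag t ⊆ X ∧ IsConnSet G X ∧ X.ncard ≤ k + 1)
    (B : Set (Set V)) (hB : IsBramble G B) :
    ∃ X, IsConnCover G B X ∧ X.ncard ≤ k + 1 := by
  classical
  obtain ⟨t0⟩ : Nonempty ι := td.isTree.isConnected.nonempty
  by_cases hcov : ∃ t, ∀ S ∈ B, (td.bag t ∩ S).Nonempty
  · obtain ⟨t, ht⟩ := hcov
    obtain ⟨X, hXsub, hXconn, hXcard⟩ := h t
    exact ⟨X, ⟨hXconn, fun S hS =>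
      (ht S hS).mono (Set.inter_subset_inter_left S hXsub)⟩, hXcard⟩
  · exfalso
    push_neg at hcov
    have hcov' : ∀ t, ∃ S, S ∈ B ∧ ∀ v ∈ S, v ∉ td.bag t := by
      intro t
      obtain ⟨S, hSB, hS⟩ := hcov t
      exact ⟨S, hSB, fun v hv hvb => Set.eq_empty_iff_forall_notMem.mp hS v ⟨hvb, hv⟩⟩
    choose Sf hSfB hSf using hcov'
    have hanch : ∀ S : Set V, ∃ u : ι, S ∈ B → ∃ v ∈ S, v ∈ td.bag u := by
      intro S
      by_cases hS : S ∈ B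
      · obtain ⟨v, hv⟩ := (hB.1 S hS).1
        obtain ⟨u, hu⟩ := td.exists_bag v
        exact ⟨u, fun _ => ⟨v, hv, hu⟩⟩
      · exact ⟨t0, fun hmem => absurd hmem hS⟩
    choose anch hanchspec using hanch
    have hexu := td.isTree.existsUnique_path
    obtain ⟨pth, hpth, huniq⟩ : ∃ pth : ∀ u v : ι, T.Walk u v,
        (∀ u v, (pth u v).IsPath) ∧
        ∀ (u v : ι) (q : T.Walk u v), q.IsPath → q = pth u v :=
      ⟨fun u v => (hexu u v).choose, fun u v => (hexu u v).choose_spec.1,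
        fun u v q hq => (hexu u v).choose_spec.2 q hq⟩
    have hanchne : ∀ t : ι, t ≠ anch (Sf t) := by
      intro t heq
      obtain ⟨v, hvS, hvb⟩ := hanchspec (Sf t) (hSfB t)
      exact hSf t v hvS (by rw [heq]; exact hvb)
    have hstepex : ∀ t : ι, ∃ u : ι, T.Adj t u ∧ u ∈ (pth t (anch (Sf t))).support ∧
        ∃ q : T.Walk u (anch (Sf t)), q.IsPath ∧ t ∉ q.support := by
      intro t
      obtain ⟨w, hadj, q, hdec⟩ := walk_decomp (pth t (anch (Sf t))) (hanchne t)
      have hp := hpth t (anch (Sf t))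
      rw [hdec, Walk.cons_isPath_iff] at hp
      refine ⟨w, hadj, ?_, q, hp.1, hp.2⟩
      rw [hdec, Walk.support_cons]
      exact List.mem_cons_of_mem _ q.start_mem_support
    choose step hstepadj hstepmem hstepq using hstepex
    have hanchside : ∀ t, anch (Sf t) ∈ Side T (step t) t := by
      intro t
      obtain ⟨q, hq, hqt⟩ := hstepq t
      exact ⟨q.reverse, hq.reverse, by rwa [Walk.support_reverse, List.mem_reverse]⟩
    have hSside : ∀ t, ∀ w ∈ Sf t, w ∈ unionBags td.bag (Side T (step t) t) := by
      intro t
      obtain ⟨v, hvS, hvb⟩ := hanchspec (Sf t) (hSfB t)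
      exact conn_subset_side td (hstepadj t).symm (hB.1 _ (hSfB t)) (hSf t) hvS
        (Set.mem_iUnion₂.mpr ⟨anch (Sf t), hanchside t, hvb⟩)
    have hnb : ∀ t, step (step t) ≠ t := by
      intro t heq
      obtain ⟨x, hx⟩ := (hB.1 _ (hSfB t)).1
      obtain ⟨y, hy⟩ := (hB.1 _ (hSfB (step t))).1
      obtain ⟨p, hp⟩ := (hB.2 _ (hSfB t) _ (hSfB (step t))).2 x
        (Set.mem_union_left _ hx) y (Set.mem_union_right _ hy)
      have hy1 : y ∈ unionBags td.bag (Side T (step t) t) := by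
        refine walk_confine td (hstepadj t).symm p ?_ (hSside t x hx)
        intro z hz hz2
        have := hp z hz
        rw [Set.mem_union] at this
        rcases this with hzS | hzS
        · exact hSf t z hzS hz2.2
        · exact hSf (step t) z hzS hz2.1
      have hy2 : y ∈ unionBags td.bag (Side T t (step t)) := by
        have := hSside (step t) y hy
        rwa [heq] at this
      have hcross := mem_bag_of_cross td (hstepadj t).symm hy1 hy2
      exact hSf (step t) y hy hcross.1
    -- the finite hull
    set Hs : Set ι := ⋃ S ∈ B, {u | u ∈ (pth t0 (anch S)).support} with hHsdef
    have hHmem : ∀ u : ι, u ∈ Hs ↔ ∃ S ∈ B, u ∈ (pth t0 (anch S)).support := by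
      intro u
      rw [hHsdef]
      simp only [Set.mem_iUnion, Set.mem_setOf_eq, exists_prop]
    have hHfin : Hs.Finite :=
      Set.Finite.biUnion (Set.toFinite B) (fun S _ => (pth t0 (anch S)).support.finite_toSet)
    have hsubH : ∀ t, t ∈ Hs → ∀ x ∈ (pth t t0).support, x ∈ Hs := by
      intro t ht x hx
      obtain ⟨S0, hS0B, htmem⟩ := (hHmem t).mp ht
      have hq : ((pth t0 (anch S0)).takeUntil t htmem).reverse = pth t t0 :=
        huniq _ _ _ ((hpth t0 (anch S0)).takeUntil htmem).reverse
      rw [← hq, Walk.support_reverse, List.mem_reverse] at hx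
      exact (hHmem x).mpr ⟨S0, hS0B, Walk.support_takeUntil_subset _ htmem hx⟩
    have hstepH : ∀ t ∈ Hs, step t ∈ Hs := by
      intro t ht
      have key : ∀ x ∈ (pth t (anch (Sf t))).support,
          x ∈ (pth t t0).support ∨ x ∈ (pth t0 (anch (Sf t))).support := by
        intro x hx
        have hbp : ((pth t t0).append (pth t0 (anch (Sf t)))).bypass = pth t (anch (Sf t)) :=
          huniq _ _ _ (Walk.bypass_isPath _)
        have hx2 : x ∈ ((pth t t0).append (pth t0 (anch (Sf t)))).support :=
          Walk.support_bypass_subset _ (by rwa [hbp])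
        rw [Walk.support_append] at hx2
        rcases List.mem_append.mp hx2 with hc | hc
        · exact Or.inl hc
        · exact Or.inr (List.mem_of_mem_tail hc)
      rcases key _ (hstepmem t) with hc | hc
      · exact hsubH t ht _ hc
      · exact (hHmem _).mpr ⟨Sf t, hSfB t, hc⟩
    -- the infinite walk
    set seq : ℕ → ι := fun n => step^[n] t0 with hseqdef
    have hseqsucc : ∀ n, seq (n+1) = step (seq n) := fun n =>
      Function.iterate_succ_apply' step n t0
    have hseqH : ∀ n, seq n ∈ Hs := by
      intro n
      induction n with
      | zero =>
          have : seq 0 = t0 := rfl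
          rw [this]
          exact (hHmem t0).mpr ⟨Sf t0, hSfB t0, (pth t0 (anch (Sf t0))).start_mem_support⟩
      | succ n ih => rw [hseqsucc]; exact hstepH _ ih
    have hseqadj : ∀ n, T.Adj (seq n) (seq (n+1)) := by
      intro n; rw [hseqsucc]; exact hstepadj _
    have hHsub : Finite ↥Hs := hHfin.to_subtype
    obtain ⟨m, n, hmn, hmneq⟩ :=
      Finite.exists_ne_map_eq_of_infinite (fun k : ℕ => (⟨seq k, hseqH k⟩ : Hs))
    have hmneq' : seq m = seq n := congrArg Subtype.val hmneq
    have hexd : ∃ d, 0 < d ∧ ∃ i, seq (i + d) = seq i := by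
      rcases Nat.lt_or_ge m n with hlt | hge
      · exact ⟨n - m, by omega, m, by rw [Nat.add_sub_cancel' hlt.le]; exact hmneq'.symm⟩
      · have hlt : n < m := by omega
        exact ⟨m - n, by omega, n, by rw [Nat.add_sub_cancel' hlt.le]; exact hmneq'⟩
    set d0 := Nat.find hexd with hd0def
    obtain ⟨hd0pos, i0, hi0⟩ := Nat.find_spec hexd
    rw [← hd0def] at hd0pos hi0
    have hmin : ∀ d, d < d0 → ¬(0 < d ∧ ∃ i, seq (i + d) = seq i) := fun d hd =>
      Nat.find_min hexd hd
    have hd1 : d0 ≠ 1 := by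
      intro h1
      rw [h1] at hi0
      exact (hseqadj i0).ne hi0.symm
    have hd2 : d0 ≠ 2 := by
      intro h2
      rw [h2] at hi0
      have h22 : seq (i0 + 2) = step (step (seq i0)) := by
        rw [show i0 + 2 = (i0 + 1) + 1 from rfl, hseqsucc, hseqsucc]
      exact hnb (seq i0) (by rw [← h22, hi0])
    have hd3 : 3 ≤ d0 := by omega
    have hwin : ∀ a b, a < b → b < d0 → seq (i0 + a) ≠ seq (i0 + b) := by
      intro a b hab hbd heq
      exact hmin (b - a) (by omega) ⟨by omega, i0 + a,
        by rw [show i0 + a + (b - a) = i0 + b by omega]; exact heq.symm⟩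
    have hW : ∀ mm : ℕ, ∃ w : T.Walk (seq i0) (seq (i0 + mm)), w.length = mm ∧
        w.support = (List.range (mm+1)).map (fun a => seq (i0 + a)) := by
      intro mm
      induction mm with
      | zero => exact ⟨Walk.nil, rfl, by simp [List.range_succ]⟩
      | succ kk ih =>
          obtain ⟨w, hl, hs⟩ := ih
          refine ⟨w.concat (hseqadj (i0 + kk)), ?_, ?_⟩
          · rw [Walk.length_concat, hl]
          · rw [Walk.support_concat, hs, List.range_succ, List.map_append]
            simp [List.concat_eq_append, List.range_succ]
    obtain ⟨mm, hmm⟩ : ∃ mm, d0 = mm + 1 := ⟨d0 - 1, by omega⟩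
    obtain ⟨w, hwl, hws⟩ := hW mm
    have hwpath : w.IsPath := by
      rw [Walk.isPath_def, hws]
      refine List.Nodup.map_on ?_ List.nodup_range
      intro a ha b hb heq
      rw [List.mem_range] at ha hb
      by_contra hne
      rcases Nat.lt_or_ge a b with hl | hg
      · exact hwin a b hl (by omega) heq
      · exact hwin b a (by omega) (by omega) heq.symm
    have hlast : seq (i0 + mm + 1) = seq i0 := by
      rw [show i0 + mm + 1 = i0 + d0 by omega]
      exact hi0
    have hadjlast : T.Adj (seq i0) (seq (i0 + mm)) := by
      have hh := hseqadj (i0 + mm)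
      rw [hlast] at hh
      exact hh.symm
    set p2 : T.Walk (seq i0) (seq (i0 + mm)) := Walk.cons hadjlast Walk.nil with hp2def
    have hp2 : p2.IsPath := by
      rw [hp2def, Walk.cons_isPath_iff]
      refine ⟨Walk.IsPath.nil, ?_⟩
      rw [Walk.support_nil, List.mem_singleton]
      intro hcontra
      exact hwin 0 mm (by omega) (by omega) (by simpa using hcontra)
    have heqw : w = p2 := (huniq _ _ w hwpath).trans (huniq _ _ p2 hp2).symm
    have hm1 : mm = 1 := by
      rw [← hwl, heqw, hp2def]
      simp
    omega
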